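/- Let W1, W2 be symmetric positive definite N×N matrices, S = W1^{1/2}(W1^{-1/2} W2 W1^{-1/2})^{1/2} W1^{1/2}, and F = S^{1/2} log(S^{-1/2} W1 S^{-1/2}) S^{1/2} the logarithmic map of W1 at S. If ψ is a common eigenvector of W1 and W2 with eigenvalues λ1 and λ2 respectively, then ψ is an eigenvector of F with eigenvalue (1/2)√(λ1 λ2)(log λ1 − log λ2). -/

import Mathlib

open Matrix

noncomputable def msqrt {N : ℕ} (A : Matrix (Fin N) (Fin N) ℝ) : Matrix (Fin N) (Fin N) ℝ :=
  cfc Real.sqrt A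

noncomputable def mlog {N : ℕ} (A : Matrix (Fin N) (Fin N) ℝ) : Matrix (Fin N) (Fin N) ℝ :=
  cfc Real.log A

noncomputable def mexp {N : ℕ} (A : Matrix (Fin N) (Fin N) ℝ) : Matrix (Fin N) (Fin N) ℝ :=
  cfc Real.exp A

noncomputable def mpow {N : ℕ} (p : ℝ) (A : Matrix (Fin N) (Fin N) ℝ) : Matrix (Fin N) (Fin N) ℝ :=
  cfc (fun x : ℝ => x ^ p) A

/-- Midpoint of the affine-invariant geodesic between `W1` and `W2`:
`S = W1^{1/2} (W1^{-1/2} W2 W1^{-1/2})^{1/2} W1^{1/2}`. -/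
noncomputable def geoMid {N : ℕ} (W1 W2 : Matrix (Fin N) (Fin N) ℝ) : Matrix (Fin N) (Fin N) ℝ :=
  msqrt W1 * msqrt ((msqrt W1)⁻¹ * W2 * (msqrt W1)⁻¹) * msqrt W1

/-- Logarithmic map at `S`: `Log_S(W) = S^{1/2} log(S^{-1/2} W S^{-1/2}) S^{1/2}`. -/
noncomputable def logMap {N : ℕ} (S W : Matrix (Fin N) (Fin N) ℝ) : Matrix (Fin N) (Fin N) ℝ :=
  msqrt S * mlog ((msqrt S)⁻¹ * W * (msqrt S)⁻¹) * msqrt S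

/-- Exponential map at `S`: `Exp_S(D) = S^{1/2} exp(S^{-1/2} D S^{-1/2}) S^{1/2}`. -/
noncomputable def expMap {N : ℕ} (S D : Matrix (Fin N) (Fin N) ℝ) : Matrix (Fin N) (Fin N) ℝ :=
  msqrt S * mexp ((msqrt S)⁻¹ * D * (msqrt S)⁻¹) * msqrt S


lemma eig_cfc {N : ℕ} {A : Matrix (Fin N) (Fin N) ℝ} (hA : A.IsHermitian)
    (f : ℝ → ℝ) {ψ : Fin N → ℝ} {μ : ℝ} (h : A *ᵥ ψ = μ • ψ) :
    cfc f A *ᵥ ψ = f μ • ψ := by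
  rw [hA.cfc_eq]
  set U : Matrix (Fin N) (Fin N) ℝ := (hA.eigenvectorUnitary : Matrix (Fin N) (Fin N) ℝ) with hU
  have hUU : star U * U = 1 := hA.eigenvectorUnitary.prop.1
  have hUU' : U * star U = 1 := hA.eigenvectorUnitary.prop.2
  set d := hA.eigenvalues with hd
  set v := star U *ᵥ ψ with hv
  have hdv : diagonal (RCLike.ofReal ∘ d) *ᵥ v = μ • v := by
    have h1 : (star U * A) *ᵥ ψ = μ • v := by
      rw [← mulVec_mulVec, h, mulVec_smul]
    have h2 : star U * A = diagonal (RCLike.ofReal ∘ d) * star U := by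
      conv_lhs => rw [hA.spectral_theorem, Unitary.conjStarAlgAut_apply]
      rw [← mul_assoc, ← mul_assoc, hUU, one_mul]
    rw [h2, ← mulVec_mulVec] at h1
    exact h1
  have key : ∀ i, f (d i) * v i = f μ * v i := by
    intro i
    rcases eq_or_ne (v i) 0 with h0 | h0
    · simp [h0]
    · have hdi : d i * v i = μ * v i := by
        simpa [mulVec_diagonal] using congrFun hdv i
      rw [mul_right_cancel₀ h0 hdi]
  show (U * diagonal (RCLike.ofReal ∘ f ∘ d) * star U) *ᵥ ψ = f μ • ψ
  rw [← mulVec_mulVec, ← mulVec_mulVec, ← hv]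
  have : diagonal (RCLike.ofReal ∘ f ∘ d) *ᵥ v = f μ • v := by
    funext i
    simpa [mulVec_diagonal] using key i
  rw [this, mulVec_smul, hv, mulVec_mulVec, hUU', one_mulVec]

lemma conj_posDef {N : ℕ} {A B : Matrix (Fin N) (Fin N) ℝ} (hA : A.PosDef)
    (hB : IsUnit B) : (Bᴴ * A * B).PosDef := by
  refine .of_dotProduct_mulVec_pos (isHermitian_conjTranspose_mul_mul B hA.1) fun x hx => ?_
  have hBx : B *ᵥ x ≠ 0 :=
    (Matrix.mulVec_injective_iff_isUnit.mpr hB).ne_iff' (by simp) |>.2 hx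
  have hpos := hA.dotProduct_mulVec_pos hBx
  have hct : Bᴴ = Bᵀ := by ext i j; simp [conjTranspose_apply]
  calc (0:ℝ) < star (B *ᵥ x) ⬝ᵥ (A *ᵥ (B *ᵥ x)) := hpos
    _ = star x ⬝ᵥ ((Bᴴ * A * B) *ᵥ x) := by
        rw [hct, ← mulVec_mulVec, ← mulVec_mulVec, star_trivial, star_trivial]
        conv_rhs => rw [dotProduct_mulVec, vecMul_transpose]

lemma posDef_cfc {N : ℕ} {A : Matrix (Fin N) (Fin N) ℝ} (hA : A.PosDef)
    {f : ℝ → ℝ} (hf : ∀ x, 0 < x → 0 < f x) : (cfc f A).PosDef := by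
  rw [hA.1.cfc_eq]
  show ((hA.1.eigenvectorUnitary : Matrix (Fin N) (Fin N) ℝ) *
    diagonal (RCLike.ofReal ∘ f ∘ hA.1.eigenvalues) *
    star (hA.1.eigenvectorUnitary : Matrix (Fin N) (Fin N) ℝ)).PosDef
  set U : Matrix (Fin N) (Fin N) ℝ := (hA.1.eigenvectorUnitary : Matrix (Fin N) (Fin N) ℝ)
  have hdiag : (diagonal (RCLike.ofReal ∘ f ∘ hA.1.eigenvalues) :
      Matrix (Fin N) (Fin N) ℝ).PosDef :=
    .diagonal fun i => hf _ (hA.eigenvalues_pos i)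
  have hUnit : IsUnit (star U) := by
    have h1 : star U * U = 1 := hA.1.eigenvectorUnitary.prop.1
    have hdet : (star U).det * U.det = 1 := by rw [← det_mul, h1, det_one]
    exact (Matrix.isUnit_iff_isUnit_det _).2 (IsUnit.of_mul_eq_one _ hdet)
  have := conj_posDef hdiag hUnit
  have hsU : (star U)ᴴ = U := by
    show star (star U) = U
    rw [star_star]
  rwa [hsU] at this

lemma inv_eig {N : ℕ} {A : Matrix (Fin N) (Fin N) ℝ} (hA : IsUnit A)
    {ψ : Fin N → ℝ} {c : ℝ} (h : A *ᵥ ψ = c • ψ) (hc : c ≠ 0) :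
    A⁻¹ *ᵥ ψ = c⁻¹ • ψ := by
  have hdet : IsUnit A.det := (Matrix.isUnit_iff_isUnit_det A).1 hA
  have h1 : A⁻¹ *ᵥ (A *ᵥ ψ) = ψ := by
    rw [mulVec_mulVec, Matrix.nonsing_inv_mul A hdet, one_mulVec]
  rw [h, mulVec_smul] at h1
  calc A⁻¹ *ᵥ ψ = c⁻¹ • (c • (A⁻¹ *ᵥ ψ)) := by
        rw [smul_smul, inv_mul_cancel₀ hc, one_smul]
    _ = c⁻¹ • ψ := by rw [h1]

lemma eig_pos {N : ℕ} {A : Matrix (Fin N) (Fin N) ℝ} (hA : A.PosDef)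
    {ψ : Fin N → ℝ} {μ : ℝ} (h : A *ᵥ ψ = μ • ψ) (hψ : ψ ≠ 0) : 0 < μ := by
  have hp := hA.dotProduct_mulVec_pos hψ
  rw [h] at hp
  have hdot : star ψ ⬝ᵥ (μ • ψ) = μ * (ψ ⬝ᵥ ψ) := by
    rw [star_trivial, dotProduct_smul, smul_eq_mul]
  rw [hdot] at hp
  have hnn : 0 ≤ ψ ⬝ᵥ ψ := by
    apply Finset.sum_nonneg
    intro i _
    exact mul_self_nonneg _
  nlinarith

lemma triple_eig {N : ℕ} {A B C : Matrix (Fin N) (Fin N) ℝ} {ψ : Fin N → ℝ}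
    {a b c : ℝ} (hA : A *ᵥ ψ = a • ψ) (hB : B *ᵥ ψ = b • ψ) (hC : C *ᵥ ψ = c • ψ) :
    (A * B * C) *ᵥ ψ = (a * b * c) • ψ := by
  rw [← mulVec_mulVec, ← mulVec_mulVec, hC, mulVec_smul, hB, smul_smul, mulVec_smul, hA,
    smul_smul]
  congr 1
  ring

/-- if ψ is a common eigenvector of SPD matrices W1, W2 with eigenvalues λ1, λ2,
then ψ is an eigenvector of F = Log_S(W1) with eigenvalue (1/2)√(λ1 λ2)(log λ1 − log λ2). -/
theorem stmt_1 {N : ℕ} (W1 W2 : Matrix (Fin N) (Fin N) ℝ)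
    (hW1 : W1.PosDef) (hW2 : W2.PosDef)
    (ψ : Fin N → ℝ) (hψ : ψ ≠ 0) (l1 l2 : ℝ)
    (h1 : W1 *ᵥ ψ = l1 • ψ) (h2 : W2 *ᵥ ψ = l2 • ψ) :
    logMap (geoMid W1 W2) W1 *ᵥ ψ =
      ((1 / 2) * Real.sqrt (l1 * l2) * (Real.log l1 - Real.log l2)) • ψ := by
  have hsq : ∀ x : ℝ, 0 < x → 0 < Real.sqrt x := fun x hx => Real.sqrt_pos.2 hx
  have hl1 : 0 < l1 := eig_pos hW1 h1 hψ
  have hl2 : 0 < l2 := eig_pos hW2 h2 hψ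
  have hsl1 : (0:ℝ) < Real.sqrt l1 := hsq _ hl1
  set P := msqrt W1 with hPdef
  have hPpos : P.PosDef := posDef_cfc hW1 hsq
  have eP : P *ᵥ ψ = Real.sqrt l1 • ψ := eig_cfc hW1.1 Real.sqrt h1
  have ePinv : P⁻¹ *ᵥ ψ = (Real.sqrt l1)⁻¹ • ψ := inv_eig hPpos.isUnit eP hsl1.ne'
  set M := P⁻¹ * W2 * P⁻¹ with hMdef
  have hPinvH : (P⁻¹)ᴴ = P⁻¹ := hPpos.inv.1
  have hMpos : M.PosDef := by
    have := conj_posDef hW2 hPpos.inv.isUnit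
    rwa [hPinvH] at this
  have eM : M *ᵥ ψ = (l2 / l1) • ψ := by
    rw [hMdef, triple_eig ePinv h2 ePinv]
    congr 1
    have hss : Real.sqrt l1 * Real.sqrt l1 = l1 := Real.mul_self_sqrt hl1.le
    field_simp
    rw [sq, hss]
  set Q := msqrt M with hQdef
  have hQpos : Q.PosDef := posDef_cfc hMpos hsq
  have eQ : Q *ᵥ ψ = Real.sqrt (l2 / l1) • ψ := eig_cfc hMpos.1 Real.sqrt eM
  have hSdef : geoMid W1 W2 = P * Q * P := rfl
  set S := geoMid W1 W2 with hS
  have hSpos : S.PosDef := by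
    rw [hSdef]
    have := conj_posDef hQpos hPpos.isUnit
    rwa [hPpos.1.eq] at this
  have hs : 0 < Real.sqrt (l1 * l2) := hsq _ (mul_pos hl1 hl2)
  have eS : S *ᵥ ψ = Real.sqrt (l1 * l2) • ψ := by
    rw [hSdef, triple_eig eP eQ eP]
    congr 1
    rw [Real.sqrt_div hl2.le, Real.sqrt_mul hl1.le]
    field_simp
  set R := msqrt S with hRdef
  have hRpos : R.PosDef := posDef_cfc hSpos hsq
  have hr : 0 < Real.sqrt (Real.sqrt (l1 * l2)) := hsq _ hs
  have eR : R *ᵥ ψ = Real.sqrt (Real.sqrt (l1 * l2)) • ψ := eig_cfc hSpos.1 Real.sqrt eS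
  have eRinv : R⁻¹ *ᵥ ψ = (Real.sqrt (Real.sqrt (l1 * l2)))⁻¹ • ψ :=
    inv_eig hRpos.isUnit eR hr.ne'
  set T := R⁻¹ * W1 * R⁻¹ with hTdef
  have hRinvH : (R⁻¹)ᴴ = R⁻¹ := hRpos.inv.1
  have hTpos : T.PosDef := by
    have := conj_posDef hW1 hRpos.inv.isUnit
    rwa [hRinvH] at this
  have hrr : Real.sqrt (Real.sqrt (l1 * l2)) * Real.sqrt (Real.sqrt (l1 * l2))
      = Real.sqrt (l1 * l2) := Real.mul_self_sqrt hs.le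
  have eT : T *ᵥ ψ = (l1 / Real.sqrt (l1 * l2)) • ψ := by
    rw [hTdef, triple_eig eRinv h1 eRinv]
    congr 1
    rw [← hrr]
    field_simp [hr.ne']
    rw [Real.sqrt_sq hr.le]
  have eL : mlog T *ᵥ ψ = Real.log (l1 / Real.sqrt (l1 * l2)) • ψ :=
    eig_cfc hTpos.1 Real.log eT
  have hfinal : logMap S W1 *ᵥ ψ =
      (Real.sqrt (Real.sqrt (l1 * l2)) * Real.log (l1 / Real.sqrt (l1 * l2)) *
        Real.sqrt (Real.sqrt (l1 * l2))) • ψ := triple_eig eR eL eR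
  rw [hfinal]
  congr 1
  have hlog : Real.log (l1 / Real.sqrt (l1 * l2)) =
      Real.log l1 - (Real.log l1 + Real.log l2) / 2 := by
    rw [Real.log_div hl1.ne' hs.ne', Real.log_sqrt (mul_pos hl1 hl2).le,
      Real.log_mul hl1.ne' hl2.ne']
  calc Real.sqrt (Real.sqrt (l1 * l2)) * Real.log (l1 / Real.sqrt (l1 * l2)) *
        Real.sqrt (Real.sqrt (l1 * l2))
      = (Real.sqrt (Real.sqrt (l1 * l2)) * Real.sqrt (Real.sqrt (l1 * l2))) *
        Real.log (l1 / Real.sqrt (l1 * l2)) := by ring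
    _ = Real.sqrt (l1 * l2) * (Real.log l1 - (Real.log l1 + Real.log l2) / 2) := by
        rw [hrr, hlog]
    _ = (1 / 2) * Real.sqrt (l1 * l2) * (Real.log l1 - Real.log l2) := by ring
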